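/- Let 0 < x₁ < x₂ < 1 and let h₁, h₂ : [0,1] → ℝ be continuously differentiable with h₁(0) = h₂(0) = 0, h₁(1) = x₁, h₂(1) = x₂, and 0 ≤ h₁'(y) ≤ h₂'(y) ≤ 1 for all y ∈ [0,1]. Let λ denote Lebesgue measure restricted to [0,1] and define the measure γ on [0,1]² as the sum of the pushforwards: of λ with density h₁' under y ↦ (h₁(y), y), plus of λ with density (h₂' − h₁') under y ↦ (x₂ − h₂(y) + h₁(y), y), plus of λ with density (1 − h₂') under y ↦ (x₂ − h₂(y) + y, y). Then γ is a doubly stochastic measure on [0,1]², and for all (x,y) ∈ [0,1]², γ([0,x]×[0,y]) equals min(x, h₁(y)) if x ∈ [0,x₁], max(x + h₂(y) − x₂, h₁(y)) if x ∈ [x₁,x₂], and min(x − x₂ + h₂(y), y) if x ∈ [x₂,1]. -/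

import Mathlib

open MeasureTheory Set Topology Filter

noncomputable def cl (y : ℝ) : ℝ := min 1 (max 0 y)

lemma cl_mem (y : ℝ) : cl y ∈ Icc (0:ℝ) 1 :=
  ⟨le_min zero_le_one (le_max_left 0 y), min_le_left 1 _⟩

lemma cl_eq {y : ℝ} (hy : y ∈ Icc (0:ℝ) 1) : cl y = y := by
  simp [cl, max_eq_right hy.1, min_eq_right hy.2]

lemma cl_cont : Continuous cl := continuous_const.min (continuous_const.max continuous_id)

section calc1
variable {f f' : ℝ → ℝ}

lemma ftcIcc (hd : ∀ y ∈ Icc (0:ℝ) 1, HasDerivWithinAt f (f' y) (Icc 0 1) y)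
    (hc : ContinuousOn f' (Icc (0:ℝ) 1))
    {a b : ℝ} (ha : 0 ≤ a) (hab : a ≤ b) (hb : b ≤ 1) :
    ∫ s in Icc a b, f' s = f b - f a := by
  have hsub : Icc a b ⊆ Icc (0:ℝ) 1 := Icc_subset_Icc ha hb
  rw [MeasureTheory.integral_Icc_eq_integral_Ioc, ← intervalIntegral.integral_of_le hab]
  apply intervalIntegral.integral_eq_sub_of_hasDeriv_right_of_le hab
  · exact fun y hy => ((hd y (hsub hy)).continuousWithinAt).mono hsub
  · intro x hx
    have hmem : x ∈ Icc (0:ℝ) 1 := hsub (Ioo_subset_Icc_self hx)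
    have h01 : x ∈ Ioo (0:ℝ) 1 := ⟨lt_of_le_of_lt ha hx.1, lt_of_lt_of_le hx.2 hb⟩
    exact (((hd x hmem).hasDerivAt (Icc_mem_nhds h01.1 h01.2))).hasDerivWithinAt
  · have : ContinuousOn f' (uIcc a b) := by rw [uIcc_of_le hab]; exact hc.mono hsub
    exact this.intervalIntegrable

lemma monoIcc (hd : ∀ y ∈ Icc (0:ℝ) 1, HasDerivWithinAt f (f' y) (Icc 0 1) y)
    (hc : ContinuousOn f' (Icc (0:ℝ) 1)) (hnn : ∀ y ∈ Icc (0:ℝ) 1, 0 ≤ f' y)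
    {a b : ℝ} (ha : 0 ≤ a) (hab : a ≤ b) (hb : b ≤ 1) : f a ≤ f b := by
  have h := ftcIcc hd hc ha hab hb
  have h2 : 0 ≤ ∫ s in Icc a b, f' s :=
    setIntegral_nonneg measurableSet_Icc (fun s hs => hnn s (Icc_subset_Icc ha hb hs))
  linarith

lemma keyLe (hd : ∀ y ∈ Icc (0:ℝ) 1, HasDerivWithinAt f (f' y) (Icc 0 1) y)
    (hc : ContinuousOn f' (Icc (0:ℝ) 1)) (hnn : ∀ y ∈ Icc (0:ℝ) 1, 0 ≤ f' y)
    (hf0 : f 0 = 0) {c y : ℝ} (hc0 : 0 ≤ c) (hy : y ∈ Icc (0:ℝ) 1) :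
    ∃ A : Set ℝ, MeasurableSet A ∧ (∀ s ∈ Icc (0:ℝ) 1, (s ∈ A ↔ s ≤ y ∧ f s ≤ c)) ∧
      ∫ s in A ∩ Icc 0 1, f' s = min c (f y) := by
  have hcontf : ContinuousOn f (Icc (0:ℝ) 1) := fun z hz => (hd z hz).continuousWithinAt
  have hmono : ∀ {a b : ℝ}, 0 ≤ a → a ≤ b → b ≤ 1 → f a ≤ f b :=
    fun ha hab hb => monoIcc hd hc hnn ha hab hb
  set S : Set ℝ := Icc 0 y ∩ f ⁻¹' (Iic c) with hSdef
  have hS0 : (0:ℝ) ∈ S := ⟨⟨le_refl 0, hy.1⟩, by simp [hf0, hc0]⟩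
  have hSclosed : IsClosed S :=
    (hcontf.mono (Icc_subset_Icc le_rfl hy.2)).preimage_isClosed_of_isClosed
      isClosed_Icc isClosed_Iic
  have hBdd : BddAbove S := ⟨y, fun s hs => hs.1.2⟩
  set t := sSup S with htdef
  have htS : t ∈ S := hSclosed.csSup_mem ⟨0, hS0⟩ hBdd
  have ht0 : 0 ≤ t := le_csSup hBdd hS0
  have hty : t ≤ y := htS.1.2
  have ht1 : t ≤ 1 := le_trans hty hy.2
  refine ⟨Icc 0 t, measurableSet_Icc, ?_, ?_⟩
  · intro s hs
    constructor
    · rintro ⟨hs0, hst⟩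
      exact ⟨le_trans hst hty, le_trans (hmono hs0 hst ht1) htS.2⟩
    · rintro ⟨hsy, hsc⟩
      exact ⟨hs.1, le_csSup hBdd ⟨⟨hs.1, hsy⟩, hsc⟩⟩
  · have hAI : Icc 0 t ∩ Icc (0:ℝ) 1 = Icc 0 t :=
      inter_eq_left.2 (Icc_subset_Icc le_rfl ht1)
    rw [hAI, ftcIcc hd hc le_rfl ht0 ht1, hf0, sub_zero]
    rcases le_or_gt (f y) c with hfy | hfy
    · have : y ∈ S := ⟨⟨hy.1, le_rfl⟩, hfy⟩
      have hyt : y ≤ t := le_csSup hBdd this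
      rw [le_antisymm hty hyt, min_eq_right hfy]
    · have htylt : t < y := by
        rcases lt_or_eq_of_le hty with h | h
        · exact h
        · exact absurd (h ▸ htS.2) (not_le.2 hfy)
      rw [min_eq_left hfy.le]
      by_contra hne
      have hftc : f t < c := lt_of_le_of_ne htS.2 hne
      have hcw : ContinuousWithinAt f (Icc 0 1) t := hcontf t ⟨ht0, ht1⟩
      have hev : ∀ᶠ z in 𝓝[Icc (0:ℝ) 1] t, f z < c := hcw.eventually_lt_const hftc
      have hne2 : (𝓝[Icc (0:ℝ) 1 ∩ Ioi t] t).NeBot := by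
        rw [← mem_closure_iff_nhdsWithin_neBot]
        have hsub2 : Ioc t y ⊆ Icc (0:ℝ) 1 ∩ Ioi t :=
          fun z hz => ⟨⟨le_trans ht0 hz.1.le, le_trans hz.2 hy.2⟩, hz.1⟩
        have : t ∈ closure (Ioc t y) := by
          rw [closure_Ioc htylt.ne]; exact ⟨le_rfl, htylt.le⟩
        exact closure_mono hsub2 this
      have hev2 : ∀ᶠ z in 𝓝[Icc (0:ℝ) 1 ∩ Ioi t] t, f z < c :=
        hev.filter_mono (nhdsWithin_mono t inter_subset_left)
      have hev3 : ∀ᶠ z in 𝓝[Icc (0:ℝ) 1 ∩ Ioi t] t, z ∈ Icc (0:ℝ) 1 ∩ Ioi t :=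
        self_mem_nhdsWithin
      have hev4 : ∀ᶠ z in 𝓝[Icc (0:ℝ) 1 ∩ Ioi t] t, z < y :=
        eventually_nhdsWithin_of_eventually_nhds (eventually_lt_nhds htylt)
      obtain ⟨z, hz1, hz2, hz3⟩ := (hev2.and (hev3.and hev4)).exists
      have : z ∈ S := ⟨⟨hz2.1.1, hz3.le⟩, hz1.le⟩
      exact absurd (le_csSup hBdd this) (not_le.2 hz2.2)

lemma keyGe (hd : ∀ y ∈ Icc (0:ℝ) 1, HasDerivWithinAt f (f' y) (Icc 0 1) y)
    (hc : ContinuousOn f' (Icc (0:ℝ) 1)) (hnn : ∀ y ∈ Icc (0:ℝ) 1, 0 ≤ f' y)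
    (hf0 : f 0 = 0) {c y : ℝ} (hc0 : 0 ≤ c) (hy : y ∈ Icc (0:ℝ) 1) :
    ∃ A : Set ℝ, MeasurableSet A ∧ (∀ s ∈ Icc (0:ℝ) 1, (s ∈ A ↔ s ≤ y ∧ c ≤ f s)) ∧
      ∫ s in A ∩ Icc 0 1, f' s = f y - min c (f y) := by
  have hcontf : ContinuousOn f (Icc (0:ℝ) 1) := fun z hz => (hd z hz).continuousWithinAt
  have hmono : ∀ {a b : ℝ}, 0 ≤ a → a ≤ b → b ≤ 1 → f a ≤ f b :=
    fun ha hab hb => monoIcc hd hc hnn ha hab hb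
  rcases lt_or_ge (f y) c with hfy | hfy
  · refine ⟨∅, MeasurableSet.empty, ?_, ?_⟩
    · intro s hs
      simp only [mem_empty_iff_false, false_iff, not_and]
      intro hsy hcf
      exact absurd (le_trans hcf (hmono hs.1 hsy hy.2)) (not_le.2 hfy)
    · rw [empty_inter, min_eq_right hfy.le, sub_self]
      simp
  · set S : Set ℝ := Icc 0 y ∩ f ⁻¹' (Ici c) with hSdef
    have hSy : y ∈ S := ⟨⟨hy.1, le_rfl⟩, hfy⟩
    have hSclosed : IsClosed S :=
      (hcontf.mono (Icc_subset_Icc le_rfl hy.2)).preimage_isClosed_of_isClosed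
        isClosed_Icc isClosed_Ici
    have hBdd : BddBelow S := ⟨0, fun s hs => hs.1.1⟩
    set t := sInf S with htdef
    have htS : t ∈ S := hSclosed.csInf_mem ⟨y, hSy⟩ hBdd
    have ht0 : 0 ≤ t := htS.1.1
    have hty : t ≤ y := csInf_le hBdd hSy
    have ht1 : t ≤ 1 := le_trans hty hy.2
    have hftc : f t = c := by
      rcases eq_or_lt_of_le ht0 with h0 | h0
      · have h1 : f t ≤ 0 := by rw [← h0, hf0]
        have h2 : c ≤ f t := htS.2
        linarith
      · by_contra hne
        have hgt : c < f t := lt_of_le_of_ne htS.2 (Ne.symm hne)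
        have hcw : ContinuousWithinAt f (Icc 0 1) t := hcontf t ⟨ht0, ht1⟩
        have hev : ∀ᶠ z in 𝓝[Icc (0:ℝ) 1] t, c < f z := hcw.eventually_const_lt hgt
        have hne2 : (𝓝[Icc (0:ℝ) 1 ∩ Iio t] t).NeBot := by
          rw [← mem_closure_iff_nhdsWithin_neBot]
          have hsub2 : Ico 0 t ⊆ Icc (0:ℝ) 1 ∩ Iio t :=
            fun z hz => ⟨⟨hz.1, le_trans hz.2.le ht1⟩, hz.2⟩
          have : t ∈ closure (Ico 0 t) := by
            rw [closure_Ico h0.ne]; exact ⟨ht0, le_rfl⟩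
          exact closure_mono hsub2 this
        have hev2 : ∀ᶠ z in 𝓝[Icc (0:ℝ) 1 ∩ Iio t] t, c < f z :=
          hev.filter_mono (nhdsWithin_mono t inter_subset_left)
        have hev3 : ∀ᶠ z in 𝓝[Icc (0:ℝ) 1 ∩ Iio t] t, z ∈ Icc (0:ℝ) 1 ∩ Iio t :=
          self_mem_nhdsWithin
        obtain ⟨z, hz1, hz2⟩ := (hev2.and hev3).exists
        have : z ∈ S := ⟨⟨hz2.1.1, le_trans hz2.2.le hty⟩, hz1.le⟩
        exact absurd (csInf_le hBdd this) (not_le.2 hz2.2)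
    refine ⟨Icc t y, measurableSet_Icc, ?_, ?_⟩
    · intro s hs
      constructor
      · rintro ⟨hts, hsy⟩
        exact ⟨hsy, hftc ▸ hmono ht0 hts hs.2⟩
      · rintro ⟨hsy, hcs⟩
        exact ⟨csInf_le hBdd ⟨⟨hs.1, hsy⟩, hcs⟩, hsy⟩
    · have hAI : Icc t y ∩ Icc (0:ℝ) 1 = Icc t y :=
        inter_eq_left.2 (Icc_subset_Icc ht0 hy.2)
      rw [hAI, ftcIcc hd hc ht0 hty hy.2, hftc, min_eq_left hfy]

end calc1

section meas

lemma Mval (w : ℝ → ℝ) (hw : ContinuousOn w (Icc (0:ℝ) 1)) (hnn : ∀ s ∈ Icc (0:ℝ) 1, 0 ≤ w s)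
    (E A : Set ℝ) (hA : MeasurableSet A) (hEA : ∀ s ∈ Icc (0:ℝ) 1, (s ∈ E ↔ s ∈ A)) :
    ((volume.restrict (Icc (0:ℝ) 1)).withDensity fun s => ENNReal.ofReal (w s)) E
      = ENNReal.ofReal (∫ s in A ∩ Icc 0 1, w s) := by
  have hEA' : E ∩ Icc (0:ℝ) 1 = A ∩ Icc (0:ℝ) 1 := by
    ext s
    simp only [mem_inter_iff]
    exact ⟨fun ⟨h1, h2⟩ => ⟨(hEA s h2).1 h1, h2⟩, fun ⟨h1, h2⟩ => ⟨(hEA s h2).2 h1, h2⟩⟩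
  rw [← restrict_withDensity measurableSet_Icc, Measure.restrict_apply' measurableSet_Icc, hEA',
    withDensity_apply _ (hA.inter measurableSet_Icc)]
  rw [← ofReal_integral_eq_lintegral_ofReal]
  · exact (hw.integrableOn_Icc).mono_set inter_subset_right
  · exact (ae_restrict_iff' (hA.inter measurableSet_Icc)).2
      (Filter.Eventually.of_forall (fun s hs => hnn s hs.2))

lemma mapPair (T w : ℝ → ℝ) (hT : ContinuousOn T (Icc (0:ℝ) 1)) (S : Set (ℝ × ℝ))
    (hS : MeasurableSet S) :
    Measure.map (fun y => (T y, y))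
      ((volume.restrict (Icc (0:ℝ) 1)).withDensity fun s => ENNReal.ofReal (w s)) S
      = ((volume.restrict (Icc (0:ℝ) 1)).withDensity fun s => ENNReal.ofReal (w s))
          {s | (T (cl s), s) ∈ S} := by
  set μ := (volume.restrict (Icc (0:ℝ) 1)).withDensity fun s => ENNReal.ofReal (w s) with hμ
  have hTcl : Continuous (fun s => T (cl s)) := hT.comp_continuous cl_cont cl_mem
  have hmeas : Measurable (fun s => (T (cl s), s)) := (hTcl.measurable).prodMk measurable_id
  have hae : (fun s => (T s, s)) =ᵐ[μ] (fun s => (T (cl s), s)) := by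
    have h1 : ∀ᵐ s ∂(volume.restrict (Icc (0:ℝ) 1)), (T s, s) = (T (cl s), s) := by
      filter_upwards [ae_restrict_mem measurableSet_Icc] with s hs
      rw [cl_eq hs]
    exact h1.filter_mono (withDensity_absolutelyContinuous _ _).ae_le
  rw [Measure.map_congr hae, Measure.map_apply hmeas hS]
  rfl

lemma muwCongr (w : ℝ → ℝ) (E E' : Set ℝ) (h : E ∩ Icc (0:ℝ) 1 = E' ∩ Icc (0:ℝ) 1) :
    ((volume.restrict (Icc (0:ℝ) 1)).withDensity fun s => ENNReal.ofReal (w s)) E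
      = ((volume.restrict (Icc (0:ℝ) 1)).withDensity fun s => ENNReal.ofReal (w s)) E' := by
  rw [← restrict_withDensity measurableSet_Icc, Measure.restrict_apply' measurableSet_Icc,
    Measure.restrict_apply' measurableSet_Icc, h]

end meas


/-- A doubly stochastic measure on `[0,1]²`. -/
def IsDoublyStochastic (μ : Measure (ℝ × ℝ)) : Prop :=
  IsProbabilityMeasure μ ∧
  (∀ B : Set ℝ, MeasurableSet B → B ⊆ Icc 0 1 → μ (B ×ˢ Icc (0:ℝ) 1) = volume B) ∧
  (∀ B : Set ℝ, MeasurableSet B → B ⊆ Icc 0 1 → μ (Icc (0:ℝ) 1 ×ˢ B) = volume B)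

theorem stmt6 (x₁ x₂ : ℝ) (hx₁ : 0 < x₁) (hx₁₂ : x₁ < x₂) (hx₂ : x₂ < 1)
    (h₁ h₂ h₁' h₂' : ℝ → ℝ)
    (hd₁ : ∀ y ∈ Icc (0:ℝ) 1, HasDerivWithinAt h₁ (h₁' y) (Icc 0 1) y)
    (hd₂ : ∀ y ∈ Icc (0:ℝ) 1, HasDerivWithinAt h₂ (h₂' y) (Icc 0 1) y)
    (hc₁ : ContinuousOn h₁' (Icc (0:ℝ) 1)) (hc₂ : ContinuousOn h₂' (Icc (0:ℝ) 1))
    (hh₁0 : h₁ 0 = 0) (hh₂0 : h₂ 0 = 0) (hh₁1 : h₁ 1 = x₁) (hh₂1 : h₂ 1 = x₂)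
    (hbound : ∀ y ∈ Icc (0:ℝ) 1, 0 ≤ h₁' y ∧ h₁' y ≤ h₂' y ∧ h₂' y ≤ 1)
    (γ : Measure (ℝ × ℝ))
    (hγ : γ =
      Measure.map (fun y => (h₁ y, y))
        ((volume.restrict (Icc (0:ℝ) 1)).withDensity fun y => ENNReal.ofReal (h₁' y)) +
      Measure.map (fun y => (x₂ - h₂ y + h₁ y, y))
        ((volume.restrict (Icc (0:ℝ) 1)).withDensity fun y => ENNReal.ofReal (h₂' y - h₁' y)) +
      Measure.map (fun y => (x₂ - h₂ y + y, y))
        ((volume.restrict (Icc (0:ℝ) 1)).withDensity fun y => ENNReal.ofReal (1 - h₂' y))) :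
    IsDoublyStochastic γ ∧
    ∀ x ∈ Icc (0:ℝ) 1, ∀ y ∈ Icc (0:ℝ) 1,
      (x ∈ Icc 0 x₁ → (γ (Icc 0 x ×ˢ Icc 0 y)).toReal = min x (h₁ y)) ∧
      (x ∈ Icc x₁ x₂ → (γ (Icc 0 x ×ˢ Icc 0 y)).toReal = max (x + h₂ y - x₂) (h₁ y)) ∧
      (x ∈ Icc x₂ 1 → (γ (Icc 0 x ×ˢ Icc 0 y)).toReal = min (x - x₂ + h₂ y) y) := by
  have hIcc1 : (1:ℝ) ∈ Icc (0:ℝ) 1 := ⟨zero_le_one, le_rfl⟩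
  have hnn₁ : ∀ s ∈ Icc (0:ℝ) 1, 0 ≤ h₁' s := fun s hs => (hbound s hs).1
  have hnn₂ : ∀ s ∈ Icc (0:ℝ) 1, 0 ≤ h₂' s - h₁' s := fun s hs => sub_nonneg.2 (hbound s hs).2.1
  have hnn₃ : ∀ s ∈ Icc (0:ℝ) 1, 0 ≤ 1 - h₂' s := fun s hs => sub_nonneg.2 (hbound s hs).2.2
  have hcw₂ : ContinuousOn (fun s => h₂' s - h₁' s) (Icc (0:ℝ) 1) := hc₂.sub hc₁
  have hcw₃ : ContinuousOn (fun s => 1 - h₂' s) (Icc (0:ℝ) 1) := continuousOn_const.sub hc₂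
  have hdg : ∀ y ∈ Icc (0:ℝ) 1,
      HasDerivWithinAt (fun s => h₂ s - h₁ s) (h₂' y - h₁' y) (Icc 0 1) y :=
    fun y hy => (hd₂ y hy).sub (hd₁ y hy)
  have hdk : ∀ y ∈ Icc (0:ℝ) 1,
      HasDerivWithinAt (fun s => s - h₂ s) (1 - h₂' y) (Icc 0 1) y :=
    fun y hy => (hasDerivWithinAt_id y _).sub (hd₂ y hy)
  have hg0 : h₂ 0 - h₁ 0 = 0 := by rw [hh₁0, hh₂0, sub_zero]
  have hk0 : (0:ℝ) - h₂ 0 = 0 := by rw [hh₂0, sub_zero]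
  have hcont₁ : ContinuousOn h₁ (Icc (0:ℝ) 1) := fun z hz => (hd₁ z hz).continuousWithinAt
  have hcont₂ : ContinuousOn h₂ (Icc (0:ℝ) 1) := fun z hz => (hd₂ z hz).continuousWithinAt
  have hcT₂ : ContinuousOn (fun y => x₂ - h₂ y + h₁ y) (Icc (0:ℝ) 1) :=
    (continuousOn_const.sub hcont₂).add hcont₁
  have hcT₃ : ContinuousOn (fun y => x₂ - h₂ y + y) (Icc (0:ℝ) 1) :=
    (continuousOn_const.sub hcont₂).add continuousOn_id
  have hb₁ : ∀ s ∈ Icc (0:ℝ) 1, 0 ≤ h₁ s ∧ h₁ s ≤ x₁ := by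
    intro s hs
    constructor
    · have := monoIcc hd₁ hc₁ hnn₁ le_rfl hs.1 hs.2; rw [hh₁0] at this; exact this
    · have := monoIcc hd₁ hc₁ hnn₁ hs.1 hs.2 le_rfl; rw [hh₁1] at this; exact this
  have hbg : ∀ s ∈ Icc (0:ℝ) 1, 0 ≤ h₂ s - h₁ s ∧ h₂ s - h₁ s ≤ x₂ - x₁ := by
    intro s hs
    constructor
    · have := monoIcc hdg hcw₂ hnn₂ le_rfl hs.1 hs.2; rw [hg0] at this; exact this
    · have := monoIcc hdg hcw₂ hnn₂ hs.1 hs.2 le_rfl; rw [hh₁1, hh₂1] at this; exact this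
  have hbk : ∀ s ∈ Icc (0:ℝ) 1, 0 ≤ s - h₂ s ∧ s - h₂ s ≤ 1 - x₂ := by
    intro s hs
    constructor
    · have := monoIcc hdk hcw₃ hnn₃ le_rfl hs.1 hs.2; rw [hk0] at this; exact this
    · have := monoIcc hdk hcw₃ hnn₃ hs.1 hs.2 le_rfl; rw [hh₂1] at this; exact this
  -- rectangle values of the three pieces
  have hm1 : ∀ x : ℝ, 0 ≤ x → ∀ y ∈ Icc (0:ℝ) 1,
      Measure.map (fun y => (h₁ y, y))
        ((volume.restrict (Icc (0:ℝ) 1)).withDensity fun y => ENNReal.ofReal (h₁' y))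
        (Icc 0 x ×ˢ Icc 0 y) = ENNReal.ofReal (min x (h₁ y)) := by
    intro x hx y hy
    obtain ⟨A, hA, hAmem, hAint⟩ := keyLe hd₁ hc₁ hnn₁ hh₁0 hx hy
    have e1 := mapPair h₁ h₁' hcont₁ (Icc 0 x ×ˢ Icc 0 y)
      (measurableSet_Icc.prod measurableSet_Icc)
    have e2 := Mval h₁' hc₁ hnn₁ {s | (h₁ (cl s), s) ∈ Icc 0 x ×ˢ Icc 0 y} A hA (by
      intro s hs
      rw [mem_setOf_eq, cl_eq hs, mem_prod, hAmem s hs]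
      constructor
      · rintro ⟨hx1, hy1⟩; exact ⟨hy1.2, hx1.2⟩
      · rintro ⟨hsy, hfx⟩; exact ⟨⟨(hb₁ s hs).1, hfx⟩, hs.1, hsy⟩)
    rw [e1, e2, hAint]
  have hm2 : ∀ x : ℝ, 0 ≤ x → ∀ y ∈ Icc (0:ℝ) 1,
      Measure.map (fun y => (x₂ - h₂ y + h₁ y, y))
        ((volume.restrict (Icc (0:ℝ) 1)).withDensity fun y => ENNReal.ofReal (h₂' y - h₁' y))
        (Icc 0 x ×ˢ Icc 0 y)
        = ENNReal.ofReal ((h₂ y - h₁ y) - min (max 0 (x₂ - x)) (h₂ y - h₁ y)) := by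
    intro x hx y hy
    have e1 : Measure.map (fun y => (x₂ - h₂ y + h₁ y, y))
        ((volume.restrict (Icc (0:ℝ) 1)).withDensity fun y => ENNReal.ofReal (h₂' y - h₁' y))
        (Icc 0 x ×ˢ Icc 0 y)
        = ((volume.restrict (Icc (0:ℝ) 1)).withDensity fun y => ENNReal.ofReal (h₂' y - h₁' y))
            {s | (x₂ - h₂ (cl s) + h₁ (cl s), s) ∈ Icc 0 x ×ˢ Icc 0 y} :=
      mapPair (fun y => x₂ - h₂ y + h₁ y) (fun y => h₂' y - h₁' y) hcT₂ _
        (measurableSet_Icc.prod measurableSet_Icc)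
    rcases le_or_gt x x₂ with hxx | hxx
    · have hc0 : (0:ℝ) ≤ x₂ - x := by linarith
      obtain ⟨A, hA, hAmem, hAint⟩ := keyGe hdg hcw₂ hnn₂ hg0 hc0 hy
      have e2 : ((volume.restrict (Icc (0:ℝ) 1)).withDensity
            fun y => ENNReal.ofReal (h₂' y - h₁' y))
            {s | (x₂ - h₂ (cl s) + h₁ (cl s), s) ∈ Icc 0 x ×ˢ Icc 0 y}
          = ENNReal.ofReal (∫ s in A ∩ Icc 0 1, (h₂' s - h₁' s)) := by
        apply Mval (fun s => h₂' s - h₁' s) hcw₂ hnn₂ _ A hA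
        intro s hs
        simp only [mem_setOf_eq, cl_eq hs, prodMk_mem_set_prod_eq, mem_Icc]
        rw [hAmem s hs]
        constructor
        · rintro ⟨⟨_, hle⟩, _, hsy⟩; exact ⟨hsy, by linarith⟩
        · rintro ⟨hsy, hge⟩
          have hb := hbg s hs
          exact ⟨⟨by linarith [hb.2], by linarith⟩, hs.1, hsy⟩
      rw [e1, e2, hAint, max_eq_right hc0]
    · have e2 : ((volume.restrict (Icc (0:ℝ) 1)).withDensity
            fun y => ENNReal.ofReal (h₂' y - h₁' y))
            {s | (x₂ - h₂ (cl s) + h₁ (cl s), s) ∈ Icc 0 x ×ˢ Icc 0 y}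
          = ENNReal.ofReal (∫ s in Icc 0 y ∩ Icc 0 1, (h₂' s - h₁' s)) := by
        apply Mval (fun s => h₂' s - h₁' s) hcw₂ hnn₂ _ (Icc 0 y) measurableSet_Icc
        intro s hs
        simp only [mem_setOf_eq, cl_eq hs, prodMk_mem_set_prod_eq, mem_Icc]
        constructor
        · rintro ⟨_, hs0, hsy⟩; exact ⟨hs0, hsy⟩
        · rintro ⟨hs0, hsy⟩
          have hb := hbg s hs
          exact ⟨⟨by linarith [hb.2], by linarith [hb.1]⟩, hs0, hsy⟩
      have hIy : Icc 0 y ∩ Icc (0:ℝ) 1 = Icc 0 y :=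
        inter_eq_left.2 (Icc_subset_Icc le_rfl hy.2)
      rw [e1, e2, hIy, ftcIcc hdg hcw₂ le_rfl hy.1 hy.2, hg0, sub_zero,
        max_eq_left (by linarith), min_eq_left (hbg y hy).1, sub_zero]
  have hm3 : ∀ x : ℝ, 0 ≤ x → ∀ y ∈ Icc (0:ℝ) 1,
      Measure.map (fun y => (x₂ - h₂ y + y, y))
        ((volume.restrict (Icc (0:ℝ) 1)).withDensity fun y => ENNReal.ofReal (1 - h₂' y))
        (Icc 0 x ×ˢ Icc 0 y)
        = ENNReal.ofReal (min (max 0 (x - x₂)) (y - h₂ y)) := by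
    intro x hx y hy
    have e1 : Measure.map (fun y => (x₂ - h₂ y + y, y))
        ((volume.restrict (Icc (0:ℝ) 1)).withDensity fun y => ENNReal.ofReal (1 - h₂' y))
        (Icc 0 x ×ˢ Icc 0 y)
        = ((volume.restrict (Icc (0:ℝ) 1)).withDensity fun y => ENNReal.ofReal (1 - h₂' y))
            {s | (x₂ - h₂ (cl s) + cl s, s) ∈ Icc 0 x ×ˢ Icc 0 y} :=
      mapPair (fun y => x₂ - h₂ y + y) (fun y => 1 - h₂' y) hcT₃ _
        (measurableSet_Icc.prod measurableSet_Icc)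
    rcases lt_or_ge x x₂ with hxx | hxx
    · have e2 : ((volume.restrict (Icc (0:ℝ) 1)).withDensity
            fun y => ENNReal.ofReal (1 - h₂' y))
            {s | (x₂ - h₂ (cl s) + cl s, s) ∈ Icc 0 x ×ˢ Icc 0 y}
          = ENNReal.ofReal (∫ s in (∅ : Set ℝ) ∩ Icc 0 1, (1 - h₂' s)) := by
        apply Mval (fun s => 1 - h₂' s) hcw₃ hnn₃ _ ∅ MeasurableSet.empty
        intro s hs
        simp only [mem_setOf_eq, cl_eq hs, prodMk_mem_set_prod_eq, mem_Icc,
          mem_empty_iff_false, iff_false, not_and]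
        rintro ⟨_, hle⟩
        intro _
        have hb := hbk s hs
        exact absurd hle (by push_neg; linarith [hb.1])
      rw [e1, e2, empty_inter]
      have hz : (∫ s in (∅ : Set ℝ), (1 - h₂' s)) = 0 := by simp
      rw [hz, max_eq_left (by linarith), min_eq_left (hbk y hy).1]
    · have hc0 : (0:ℝ) ≤ x - x₂ := by linarith
      obtain ⟨A, hA, hAmem, hAint⟩ := keyLe hdk hcw₃ hnn₃ hk0 hc0 hy
      have e2 : ((volume.restrict (Icc (0:ℝ) 1)).withDensity
            fun y => ENNReal.ofReal (1 - h₂' y))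
            {s | (x₂ - h₂ (cl s) + cl s, s) ∈ Icc 0 x ×ˢ Icc 0 y}
          = ENNReal.ofReal (∫ s in A ∩ Icc 0 1, (1 - h₂' s)) := by
        apply Mval (fun s => 1 - h₂' s) hcw₃ hnn₃ _ A hA
        intro s hs
        simp only [mem_setOf_eq, cl_eq hs, prodMk_mem_set_prod_eq, mem_Icc]
        rw [hAmem s hs]
        constructor
        · rintro ⟨⟨_, hle⟩, _, hsy⟩; exact ⟨hsy, by linarith⟩
        · rintro ⟨hsy, hle⟩
          have hb := hbk s hs
          exact ⟨⟨by linarith [hb.2], by linarith⟩, hs.1, hsy⟩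
      rw [e1, e2, hAint, max_eq_right hc0]
  have hrect : ∀ x : ℝ, 0 ≤ x → ∀ y ∈ Icc (0:ℝ) 1, (γ (Icc 0 x ×ˢ Icc 0 y)).toReal
      = min x (h₁ y) + ((h₂ y - h₁ y) - min (max 0 (x₂ - x)) (h₂ y - h₁ y))
        + min (max 0 (x - x₂)) (y - h₂ y) := by
    intro x hx y hy
    rw [hγ, Measure.add_apply, Measure.add_apply, hm1 x hx y hy, hm2 x hx y hy, hm3 x hx y hy]
    have n1 : 0 ≤ min x (h₁ y) := le_min hx (hb₁ y hy).1
    have n2 : 0 ≤ (h₂ y - h₁ y) - min (max 0 (x₂ - x)) (h₂ y - h₁ y) :=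
      sub_nonneg.2 (min_le_right _ _)
    have n3 : 0 ≤ min (max 0 (x - x₂)) (y - h₂ y) := le_min (le_max_left _ _) (hbk y hy).1
    rw [← ENNReal.ofReal_add n1 n2, ← ENNReal.ofReal_add (by linarith) n3,
      ENNReal.toReal_ofReal (by linarith)]
  refine ⟨⟨?_, ?_, ?_⟩, ?_⟩
  · -- probability measure
    refine ⟨?_⟩
    rw [hγ, Measure.add_apply, Measure.add_apply]
    have u1 : Measure.map (fun y => (h₁ y, y))
        ((volume.restrict (Icc (0:ℝ) 1)).withDensity fun y => ENNReal.ofReal (h₁' y))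
        univ = ENNReal.ofReal x₁ := by
      rw [mapPair h₁ h₁' hcont₁ univ MeasurableSet.univ,
        Mval h₁' hc₁ hnn₁ _ univ MeasurableSet.univ (fun s _ => by simp), univ_inter,
        ftcIcc hd₁ hc₁ le_rfl zero_le_one le_rfl, hh₁1, hh₁0, sub_zero]
    have u2 : Measure.map (fun y => (x₂ - h₂ y + h₁ y, y))
        ((volume.restrict (Icc (0:ℝ) 1)).withDensity fun y => ENNReal.ofReal (h₂' y - h₁' y))
        univ = ENNReal.ofReal (x₂ - x₁) := by
      have e1 : Measure.map (fun y => (x₂ - h₂ y + h₁ y, y))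
          ((volume.restrict (Icc (0:ℝ) 1)).withDensity fun y => ENNReal.ofReal (h₂' y - h₁' y))
          univ
          = ((volume.restrict (Icc (0:ℝ) 1)).withDensity fun y => ENNReal.ofReal (h₂' y - h₁' y))
              {s | (x₂ - h₂ (cl s) + h₁ (cl s), s) ∈ (univ : Set (ℝ × ℝ))} :=
        mapPair (fun y => x₂ - h₂ y + h₁ y) (fun y => h₂' y - h₁' y) hcT₂ _ MeasurableSet.univ
      rw [e1, Mval (fun s => h₂' s - h₁' s) hcw₂ hnn₂ _ univ MeasurableSet.univ
          (fun s _ => by simp), univ_inter, ftcIcc hdg hcw₂ le_rfl zero_le_one le_rfl, hg0,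
        hh₁1, hh₂1, sub_zero]
    have u3 : Measure.map (fun y => (x₂ - h₂ y + y, y))
        ((volume.restrict (Icc (0:ℝ) 1)).withDensity fun y => ENNReal.ofReal (1 - h₂' y))
        univ = ENNReal.ofReal (1 - x₂) := by
      have e1 : Measure.map (fun y => (x₂ - h₂ y + y, y))
          ((volume.restrict (Icc (0:ℝ) 1)).withDensity fun y => ENNReal.ofReal (1 - h₂' y))
          univ
          = ((volume.restrict (Icc (0:ℝ) 1)).withDensity fun y => ENNReal.ofReal (1 - h₂' y))
              {s | (x₂ - h₂ (cl s) + cl s, s) ∈ (univ : Set (ℝ × ℝ))} :=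
        mapPair (fun y => x₂ - h₂ y + y) (fun y => 1 - h₂' y) hcT₃ _ MeasurableSet.univ
      rw [e1, Mval (fun s => 1 - h₂' s) hcw₃ hnn₃ _ univ MeasurableSet.univ
          (fun s _ => by simp), univ_inter, ftcIcc hdk hcw₃ le_rfl zero_le_one le_rfl, hk0,
        hh₂1, sub_zero]
    rw [u1, u2, u3, ← ENNReal.ofReal_add (by linarith) (by linarith),
      ← ENNReal.ofReal_add (by linarith) (by linarith),
      show x₁ + (x₂ - x₁) + (1 - x₂) = (1:ℝ) by ring, ENNReal.ofReal_one]
  · -- first marginal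
    intro B hB hBsub
    have ht1c : Continuous (fun s => h₁ (cl s)) := hcont₁.comp_continuous cl_cont cl_mem
    have ht2c : Continuous (fun s => x₂ - h₂ (cl s) + h₁ (cl s)) :=
      hcT₂.comp_continuous cl_cont cl_mem
    have ht3c : Continuous (fun s => x₂ - h₂ (cl s) + cl s) :=
      hcT₃.comp_continuous cl_cont cl_mem
    haveI i1 : IsFiniteMeasure (Measure.map (fun s => h₁ (cl s))
        ((volume.restrict (Icc (0:ℝ) 1)).withDensity fun y => ENNReal.ofReal (h₁' y))) := by
      constructor
      rw [Measure.map_apply ht1c.measurable MeasurableSet.univ, preimage_univ,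
        Mval h₁' hc₁ hnn₁ univ univ MeasurableSet.univ (fun s _ => Iff.rfl)]
      exact ENNReal.ofReal_lt_top
    haveI i2 : IsFiniteMeasure (Measure.map (fun s => x₂ - h₂ (cl s) + h₁ (cl s))
        ((volume.restrict (Icc (0:ℝ) 1)).withDensity
          fun y => ENNReal.ofReal (h₂' y - h₁' y))) := by
      constructor
      rw [Measure.map_apply ht2c.measurable MeasurableSet.univ, preimage_univ,
        Mval (fun s => h₂' s - h₁' s) hcw₂ hnn₂ univ univ MeasurableSet.univ
          (fun s _ => Iff.rfl)]
      exact ENNReal.ofReal_lt_top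
    haveI i3 : IsFiniteMeasure (Measure.map (fun s => x₂ - h₂ (cl s) + cl s)
        ((volume.restrict (Icc (0:ℝ) 1)).withDensity
          fun y => ENNReal.ofReal (1 - h₂' y))) := by
      constructor
      rw [Measure.map_apply ht3c.measurable MeasurableSet.univ, preimage_univ,
        Mval (fun s => 1 - h₂' s) hcw₃ hnn₃ univ univ MeasurableSet.univ
          (fun s _ => Iff.rfl)]
      exact ENNReal.ofReal_lt_top
    have hν : (Measure.map (fun s => h₁ (cl s))
          ((volume.restrict (Icc (0:ℝ) 1)).withDensity fun y => ENNReal.ofReal (h₁' y))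
        + Measure.map (fun s => x₂ - h₂ (cl s) + h₁ (cl s))
          ((volume.restrict (Icc (0:ℝ) 1)).withDensity fun y => ENNReal.ofReal (h₂' y - h₁' y))
        + Measure.map (fun s => x₂ - h₂ (cl s) + cl s)
          ((volume.restrict (Icc (0:ℝ) 1)).withDensity fun y => ENNReal.ofReal (1 - h₂' y)))
        = volume.restrict (Icc 0 1) := by
      refine Measure.ext_of_Iic _ _ (fun a => ?_)
      rw [Measure.add_apply, Measure.add_apply,
        Measure.map_apply ht1c.measurable measurableSet_Iic,
        Measure.map_apply ht2c.measurable measurableSet_Iic,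
        Measure.map_apply ht3c.measurable measurableSet_Iic,
        Measure.restrict_apply measurableSet_Iic]
      rcases lt_or_ge a 0 with ha | ha
      · have v1 := Mval h₁' hc₁ hnn₁ ((fun s => h₁ (cl s)) ⁻¹' Iic a) ∅
          MeasurableSet.empty (by
            intro s hs
            simp only [mem_preimage, mem_Iic, cl_eq hs, mem_empty_iff_false, iff_false, not_le]
            linarith [(hb₁ s hs).1])
        have v2 := Mval (fun s => h₂' s - h₁' s) hcw₂ hnn₂
          ((fun s => x₂ - h₂ (cl s) + h₁ (cl s)) ⁻¹' Iic a) ∅ MeasurableSet.empty (by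
            intro s hs
            simp only [mem_preimage, mem_Iic, cl_eq hs, mem_empty_iff_false, iff_false, not_le]
            linarith [(hbg s hs).2])
        have v3 := Mval (fun s => 1 - h₂' s) hcw₃ hnn₃
          ((fun s => x₂ - h₂ (cl s) + cl s) ⁻¹' Iic a) ∅ MeasurableSet.empty (by
            intro s hs
            simp only [mem_preimage, mem_Iic, cl_eq hs, mem_empty_iff_false, iff_false, not_le]
            linarith [(hbk s hs).1])
        have hempty : Iic a ∩ Icc (0:ℝ) 1 = ∅ := by
          apply eq_empty_iff_forall_notMem.2
          rintro z ⟨hz1, hz2⟩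
          have := hz2.1
          simp only [mem_Iic] at hz1
          linarith
        rw [v1, v2, v3, hempty]
        simp only [empty_inter, Measure.restrict_empty, integral_zero_measure,
          ENNReal.ofReal_zero, add_zero, zero_add, measure_empty]
      · have hRHS : volume (Iic a ∩ Icc (0:ℝ) 1) = ENNReal.ofReal (min a 1) := by
          have hset : Iic a ∩ Icc (0:ℝ) 1 = Icc 0 (min a 1) := by
            ext z
            simp only [mem_inter_iff, mem_Iic, mem_Icc, le_min_iff]
            constructor
            · rintro ⟨h1, h2, h3⟩; exact ⟨h2, h1, h3⟩
            · rintro ⟨h2, h1, h3⟩; exact ⟨h1, h2, h3⟩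
          rw [hset, Real.volume_Icc, sub_zero]
        rw [hRHS]
        obtain ⟨A1, hA1, hA1mem, hA1int⟩ := keyLe hd₁ hc₁ hnn₁ hh₁0 ha hIcc1
        have v1 := Mval h₁' hc₁ hnn₁ ((fun s => h₁ (cl s)) ⁻¹' Iic a) A1 hA1 (by
          intro s hs
          simp only [mem_preimage, mem_Iic, cl_eq hs]
          rw [hA1mem s hs]
          exact ⟨fun h => ⟨hs.2, h⟩, fun h => h.2⟩)
        rw [v1, hA1int, hh₁1]
        have n1 : (0:ℝ) ≤ min a x₁ := le_min ha hx₁.le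
        rcases le_or_gt a x₂ with hax | hax
        · obtain ⟨A2, hA2, hA2mem, hA2int⟩ := keyGe hdg hcw₂ hnn₂ hg0
            (show (0:ℝ) ≤ x₂ - a by linarith) hIcc1
          have v2 := Mval (fun s => h₂' s - h₁' s) hcw₂ hnn₂
            ((fun s => x₂ - h₂ (cl s) + h₁ (cl s)) ⁻¹' Iic a) A2 hA2 (by
              intro s hs
              simp only [mem_preimage, mem_Iic, cl_eq hs]
              rw [hA2mem s hs]
              constructor
              · intro h; exact ⟨hs.2, by linarith⟩
              · rintro ⟨_, h⟩; linarith)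
          rw [v2, hA2int, hh₁1, hh₂1]
          have n2 : (0:ℝ) ≤ x₂ - x₁ - min (x₂ - a) (x₂ - x₁) :=
            sub_nonneg.2 (min_le_right _ _)
          rcases lt_or_ge a x₂ with hax3 | hax3
          · have v3 := Mval (fun s => 1 - h₂' s) hcw₃ hnn₃
              ((fun s => x₂ - h₂ (cl s) + cl s) ⁻¹' Iic a) ∅ MeasurableSet.empty (by
                intro s hs
                simp only [mem_preimage, mem_Iic, cl_eq hs, mem_empty_iff_false, iff_false,
                  not_le]
                linarith [(hbk s hs).1])
            rw [v3, empty_inter]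
            have hz : (∫ s in (∅ : Set ℝ), (1 - h₂' s)) = 0 := by simp
            rw [hz, ENNReal.ofReal_zero, add_zero, ← ENNReal.ofReal_add n1 n2]
            congr 1
            rcases le_total a x₁ with h | h
            · rw [min_eq_left h, min_eq_right (by linarith), min_eq_left (by linarith)]
              ring
            · rw [min_eq_right h, min_eq_left (by linarith), min_eq_left (by linarith)]
              ring
          · obtain ⟨A3, hA3, hA3mem, hA3int⟩ := keyLe hdk hcw₃ hnn₃ hk0
              (show (0:ℝ) ≤ a - x₂ by linarith) hIcc1
            have v3 := Mval (fun s => 1 - h₂' s) hcw₃ hnn₃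
              ((fun s => x₂ - h₂ (cl s) + cl s) ⁻¹' Iic a) A3 hA3 (by
                intro s hs
                simp only [mem_preimage, mem_Iic, cl_eq hs]
                rw [hA3mem s hs]
                constructor
                · intro h; exact ⟨hs.2, by linarith⟩
                · rintro ⟨_, h⟩; linarith)
            rw [v3, hA3int, hh₂1]
            have n3 : (0:ℝ) ≤ min (a - x₂) (1 - x₂) := le_min (by linarith) (by linarith)
            rw [← ENNReal.ofReal_add n1 n2, ← ENNReal.ofReal_add (by linarith) n3]
            congr 1
            have haeq : a = x₂ := le_antisymm hax hax3
            rw [min_eq_right (by linarith), min_eq_left (by linarith),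
              min_eq_left (by linarith), min_eq_left (by linarith)]
            linarith
        · have v2 := Mval (fun s => h₂' s - h₁' s) hcw₂ hnn₂
            ((fun s => x₂ - h₂ (cl s) + h₁ (cl s)) ⁻¹' Iic a) (Icc 0 1)
            measurableSet_Icc (by
              intro s hs
              simp only [mem_preimage, mem_Iic, cl_eq hs]
              have hb := hbg s hs
              exact ⟨fun _ => hs, fun _ => by linarith [hb.1]⟩)
          rw [v2, inter_self, ftcIcc hdg hcw₂ le_rfl zero_le_one le_rfl, hg0, sub_zero,
            hh₁1, hh₂1]
          obtain ⟨A3, hA3, hA3mem, hA3int⟩ := keyLe hdk hcw₃ hnn₃ hk0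
            (show (0:ℝ) ≤ a - x₂ by linarith) hIcc1
          have v3 := Mval (fun s => 1 - h₂' s) hcw₃ hnn₃
            ((fun s => x₂ - h₂ (cl s) + cl s) ⁻¹' Iic a) A3 hA3 (by
              intro s hs
              simp only [mem_preimage, mem_Iic, cl_eq hs]
              rw [hA3mem s hs]
              constructor
              · intro h; exact ⟨hs.2, by linarith⟩
              · rintro ⟨_, h⟩; linarith)
          rw [v3, hA3int, hh₂1]
          have n3 : (0:ℝ) ≤ min (a - x₂) (1 - x₂) := le_min (by linarith) (by linarith)
          rw [← ENNReal.ofReal_add n1 (by linarith), ← ENNReal.ofReal_add (by linarith) n3]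
          congr 1
          rcases le_total a 1 with h | h
          · rw [min_eq_right (by linarith), min_eq_left (by linarith),
              min_eq_left (by linarith)]
            linarith
          · rw [min_eq_right (by linarith), min_eq_right (by linarith),
              min_eq_right (by linarith)]
            linarith
    have k1 : Measure.map (fun y => (h₁ y, y))
        ((volume.restrict (Icc (0:ℝ) 1)).withDensity fun y => ENNReal.ofReal (h₁' y))
        (B ×ˢ Icc (0:ℝ) 1)
        = Measure.map (fun s => h₁ (cl s))
            ((volume.restrict (Icc (0:ℝ) 1)).withDensity fun y => ENNReal.ofReal (h₁' y)) B := by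
      rw [mapPair h₁ h₁' hcont₁ _ (hB.prod measurableSet_Icc),
        Measure.map_apply ht1c.measurable hB]
      apply muwCongr
      ext s
      simp only [mem_inter_iff, mem_setOf_eq, prodMk_mem_set_prod_eq, mem_preimage]
      constructor
      · rintro ⟨⟨hh, _⟩, h3⟩; exact ⟨hh, h3⟩
      · rintro ⟨hh, h3⟩; exact ⟨⟨hh, h3⟩, h3⟩
    have k2 : Measure.map (fun y => (x₂ - h₂ y + h₁ y, y))
        ((volume.restrict (Icc (0:ℝ) 1)).withDensity fun y => ENNReal.ofReal (h₂' y - h₁' y))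
        (B ×ˢ Icc (0:ℝ) 1)
        = Measure.map (fun s => x₂ - h₂ (cl s) + h₁ (cl s))
            ((volume.restrict (Icc (0:ℝ) 1)).withDensity
              fun y => ENNReal.ofReal (h₂' y - h₁' y)) B := by
      have e1 : Measure.map (fun y => (x₂ - h₂ y + h₁ y, y))
          ((volume.restrict (Icc (0:ℝ) 1)).withDensity fun y => ENNReal.ofReal (h₂' y - h₁' y))
          (B ×ˢ Icc (0:ℝ) 1)
          = ((volume.restrict (Icc (0:ℝ) 1)).withDensity fun y => ENNReal.ofReal (h₂' y - h₁' y))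
              {s | (x₂ - h₂ (cl s) + h₁ (cl s), s) ∈ B ×ˢ Icc (0:ℝ) 1} :=
        mapPair (fun y => x₂ - h₂ y + h₁ y) (fun y => h₂' y - h₁' y) hcT₂ _
          (hB.prod measurableSet_Icc)
      rw [e1, Measure.map_apply ht2c.measurable hB]
      apply muwCongr
      ext s
      simp only [mem_inter_iff, mem_setOf_eq, prodMk_mem_set_prod_eq, mem_preimage]
      constructor
      · rintro ⟨⟨hh, _⟩, h3⟩; exact ⟨hh, h3⟩
      · rintro ⟨hh, h3⟩; exact ⟨⟨hh, h3⟩, h3⟩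
    have k3 : Measure.map (fun y => (x₂ - h₂ y + y, y))
        ((volume.restrict (Icc (0:ℝ) 1)).withDensity fun y => ENNReal.ofReal (1 - h₂' y))
        (B ×ˢ Icc (0:ℝ) 1)
        = Measure.map (fun s => x₂ - h₂ (cl s) + cl s)
            ((volume.restrict (Icc (0:ℝ) 1)).withDensity
              fun y => ENNReal.ofReal (1 - h₂' y)) B := by
      have e1 : Measure.map (fun y => (x₂ - h₂ y + y, y))
          ((volume.restrict (Icc (0:ℝ) 1)).withDensity fun y => ENNReal.ofReal (1 - h₂' y))
          (B ×ˢ Icc (0:ℝ) 1)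
          = ((volume.restrict (Icc (0:ℝ) 1)).withDensity fun y => ENNReal.ofReal (1 - h₂' y))
              {s | (x₂ - h₂ (cl s) + cl s, s) ∈ B ×ˢ Icc (0:ℝ) 1} :=
        mapPair (fun y => x₂ - h₂ y + y) (fun y => 1 - h₂' y) hcT₃ _
          (hB.prod measurableSet_Icc)
      rw [e1, Measure.map_apply ht3c.measurable hB]
      apply muwCongr
      ext s
      simp only [mem_inter_iff, mem_setOf_eq, prodMk_mem_set_prod_eq, mem_preimage]
      constructor
      · rintro ⟨⟨hh, _⟩, h3⟩; exact ⟨hh, h3⟩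
      · rintro ⟨hh, h3⟩; exact ⟨⟨hh, h3⟩, h3⟩
    rw [hγ, Measure.add_apply, Measure.add_apply, k1, k2, k3, ← Measure.add_apply,
      ← Measure.add_apply, hν, Measure.restrict_apply hB, inter_eq_left.2 hBsub]
  · -- second marginal
    intro B hB hBsub
    rw [hγ, Measure.add_apply, Measure.add_apply]
    have hBI : B ∩ Icc (0:ℝ) 1 = B := inter_eq_left.2 hBsub
    have hS : MeasurableSet (Icc (0:ℝ) 1 ×ˢ B) := measurableSet_Icc.prod hB
    have u1 : Measure.map (fun y => (h₁ y, y))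
        ((volume.restrict (Icc (0:ℝ) 1)).withDensity fun y => ENNReal.ofReal (h₁' y))
        (Icc (0:ℝ) 1 ×ˢ B) = ENNReal.ofReal (∫ s in B, h₁' s) := by
      rw [mapPair h₁ h₁' hcont₁ _ hS, Mval h₁' hc₁ hnn₁ _ B hB ?_, hBI]
      intro s hs
      simp only [mem_setOf_eq, cl_eq hs, prodMk_mem_set_prod_eq]
      have hb := hb₁ s hs
      exact ⟨fun h => h.2, fun h => ⟨⟨hb.1, by linarith [hb.2]⟩, h⟩⟩
    have u2 : Measure.map (fun y => (x₂ - h₂ y + h₁ y, y))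
        ((volume.restrict (Icc (0:ℝ) 1)).withDensity fun y => ENNReal.ofReal (h₂' y - h₁' y))
        (Icc (0:ℝ) 1 ×ˢ B) = ENNReal.ofReal (∫ s in B, (h₂' s - h₁' s)) := by
      have e1 : Measure.map (fun y => (x₂ - h₂ y + h₁ y, y))
          ((volume.restrict (Icc (0:ℝ) 1)).withDensity fun y => ENNReal.ofReal (h₂' y - h₁' y))
          (Icc (0:ℝ) 1 ×ˢ B)
          = ((volume.restrict (Icc (0:ℝ) 1)).withDensity fun y => ENNReal.ofReal (h₂' y - h₁' y))
              {s | (x₂ - h₂ (cl s) + h₁ (cl s), s) ∈ Icc (0:ℝ) 1 ×ˢ B} :=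
        mapPair (fun y => x₂ - h₂ y + h₁ y) (fun y => h₂' y - h₁' y) hcT₂ _ hS
      rw [e1, Mval (fun s => h₂' s - h₁' s) hcw₂ hnn₂ _ B hB ?_, hBI]
      intro s hs
      simp only [mem_setOf_eq, cl_eq hs, prodMk_mem_set_prod_eq, mem_Icc]
      have hb := hbg s hs
      exact ⟨fun h => h.2, fun h => ⟨⟨by linarith [hb.2], by linarith [hb.1]⟩, h⟩⟩
    have u3 : Measure.map (fun y => (x₂ - h₂ y + y, y))
        ((volume.restrict (Icc (0:ℝ) 1)).withDensity fun y => ENNReal.ofReal (1 - h₂' y))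
        (Icc (0:ℝ) 1 ×ˢ B) = ENNReal.ofReal (∫ s in B, (1 - h₂' s)) := by
      have e1 : Measure.map (fun y => (x₂ - h₂ y + y, y))
          ((volume.restrict (Icc (0:ℝ) 1)).withDensity fun y => ENNReal.ofReal (1 - h₂' y))
          (Icc (0:ℝ) 1 ×ˢ B)
          = ((volume.restrict (Icc (0:ℝ) 1)).withDensity fun y => ENNReal.ofReal (1 - h₂' y))
              {s | (x₂ - h₂ (cl s) + cl s, s) ∈ Icc (0:ℝ) 1 ×ˢ B} :=
        mapPair (fun y => x₂ - h₂ y + y) (fun y => 1 - h₂' y) hcT₃ _ hS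
      rw [e1, Mval (fun s => 1 - h₂' s) hcw₃ hnn₃ _ B hB ?_, hBI]
      intro s hs
      simp only [mem_setOf_eq, cl_eq hs, prodMk_mem_set_prod_eq, mem_Icc]
      have hb := hbk s hs
      exact ⟨fun h => h.2, fun h => ⟨⟨by linarith [hb.2, hx₁, hx₁₂], by linarith [hb.1]⟩, h⟩⟩
    have iw₁ : IntegrableOn h₁' B volume := (hc₁.integrableOn_Icc).mono_set hBsub
    have iw₂ : IntegrableOn (fun s => h₂' s - h₁' s) B volume :=
      (hcw₂.integrableOn_Icc).mono_set hBsub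
    have iw₃ : IntegrableOn (fun s => 1 - h₂' s) B volume :=
      (hcw₃.integrableOn_Icc).mono_set hBsub
    have in₁ : 0 ≤ ∫ s in B, h₁' s :=
      setIntegral_nonneg hB (fun s hs => hnn₁ s (hBsub hs))
    have in₂ : 0 ≤ ∫ s in B, (h₂' s - h₁' s) :=
      setIntegral_nonneg hB (fun s hs => hnn₂ s (hBsub hs))
    have in₃ : 0 ≤ ∫ s in B, (1 - h₂' s) :=
      setIntegral_nonneg hB (fun s hs => hnn₃ s (hBsub hs))
    have in₁₂ : 0 ≤ ∫ s in B, (h₁' s + (h₂' s - h₁' s)) :=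
      setIntegral_nonneg hB (fun s hs => by
        have := hnn₁ s (hBsub hs); have := hnn₂ s (hBsub hs); linarith)
    rw [u1, u2, u3, ← ENNReal.ofReal_add in₁ in₂, ← integral_add iw₁ iw₂,
      ← ENNReal.ofReal_add in₁₂ in₃,
      ← integral_add (show IntegrableOn (fun s => h₁' s + (h₂' s - h₁' s)) B volume
          from iw₁.add iw₂) iw₃]
    have hone : ∫ s in B, (h₁' s + (h₂' s - h₁' s) + (1 - h₂' s)) = ∫ s in B, (1:ℝ) := by
      apply integral_congr_ae
      filter_upwards with s
      ring
    rw [hone, setIntegral_const, smul_eq_mul, mul_one,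
      measureReal_def,
      ENNReal.ofReal_toReal (lt_of_le_of_lt (measure_mono hBsub) measure_Icc_lt_top).ne]
  · -- CDF values
    intro x hxmem y hymem
    have hx0 : (0:ℝ) ≤ x := hxmem.1
    have hby := hb₁ y hymem
    have hbgy := hbg y hymem
    have hbky := hbk y hymem
    refine ⟨?_, ?_, ?_⟩
    · intro hxr
      rw [hrect x hx0 y hymem, max_eq_right (show (0:ℝ) ≤ x₂ - x by linarith [hxr.2]),
        min_eq_right (show h₂ y - h₁ y ≤ x₂ - x by linarith [hbgy.2, hxr.2]),
        max_eq_left (show x - x₂ ≤ 0 by linarith [hxr.2]),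
        min_eq_left (show (0:ℝ) ≤ y - h₂ y from hbky.1)]
      ring
    · intro hxr
      rw [hrect x hx0 y hymem,
        min_eq_right (show h₁ y ≤ x by linarith [hby.2, hxr.1]),
        max_eq_right (show (0:ℝ) ≤ x₂ - x by linarith [hxr.2]),
        max_eq_left (show x - x₂ ≤ 0 by linarith [hxr.2]),
        min_eq_left (show (0:ℝ) ≤ y - h₂ y from hbky.1)]
      rcases le_total (x₂ - x) (h₂ y - h₁ y) with h | h
      · rw [min_eq_left h, max_eq_left (show h₁ y ≤ x + h₂ y - x₂ by linarith)]
        ring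
      · rw [min_eq_right h, max_eq_right (show x + h₂ y - x₂ ≤ h₁ y by linarith)]
        ring
    · intro hxr
      rw [hrect x hx0 y hymem,
        min_eq_right (show h₁ y ≤ x by linarith [hby.2, hxr.1]),
        max_eq_left (show x₂ - x ≤ 0 by linarith [hxr.1]),
        min_eq_left (show (0:ℝ) ≤ h₂ y - h₁ y from hbgy.1),
        max_eq_right (show (0:ℝ) ≤ x - x₂ by linarith [hxr.1])]
      rcases le_total (x - x₂) (y - h₂ y) with h | h
      · rw [min_eq_left h, min_eq_left (show x - x₂ + h₂ y ≤ y by linarith)]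
        ring
      · rw [min_eq_right h, min_eq_right (show y ≤ x - x₂ + h₂ y by linarith)]
        ring
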